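/- (Jackson estimate, single tree, r = 1.) Let 𝒯 satisfy the geometric decay condition with parameter 0 < ρ < 1, let 1 ≤ p < ∞, α > 0, 1/τ = α + 1/p, and suppose f = Σ_{Ω∈𝒯} ψ_Ω with N_τ(f,𝒯) < ∞. Let f_M = Σ_{m=1}^M ψ_{Ω_{k_m}} be the M-term approximation obtained by keeping the M wavelets with largest L_p norms. Then ‖f − f_M‖_p ≤ C(p, α, ρ) M^{−α} N_τ(f,𝒯), where C does not depend on the dimension n. -/

import Mathlib

open MeasureTheory
open scoped ENNReal

/-- The mean `E⃗_Ω` of `f` over `Ω`. -/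
noncomputable def cellMean {n d : ℕ} (f : (Fin n → ℝ) → EuclideanSpace ℝ (Fin d))
    (Ω : Set (Fin n → ℝ)) : EuclideanSpace ℝ (Fin d) := ⨍ x in Ω, f x

/-- The `τ`-th power of the averaged-modulus Besov semi-norm
`|f|_{B̃_τ^{α,1}(𝒯)} = (Σ_{Ω∈𝒯} (|Ω|^{-α} w₁(f,Ω)_τ)^τ)^{1/τ}`, where
`w₁(f,Ω)_τ^τ = ∫_Ω ‖f - E⃗_Ω‖_{ℓ₂}^τ`; node `(l,j)` is the `j`-th cell at level `l`. -/
noncomputable def besovTildeTau {n d : ℕ} (α τ : ℝ)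
    (f : (Fin n → ℝ) → EuclideanSpace ℝ (Fin d))
    (cells : ℕ → ℕ → Set (Fin n → ℝ)) : ℝ≥0∞ :=
  ∑' (l : ℕ) (j : ℕ), volume (cells l j) ^ (-(α * τ)) *
    ∫⁻ x in cells l j, (‖f x - cellMean f (cells l j)‖₊ : ℝ≥0∞) ^ τ

/-- The `τ`-th power of the tree sparsity `N_τ(f,𝒯) = (Σ_{Ω'≠Ω₀} ‖ψ_{Ω'}‖_p^τ)^{1/τ}`, where
`‖ψ_{Ω'}‖_p^τ = ‖E⃗_{Ω'} - E⃗_Ω‖_{ℓ₂}^τ |Ω'|^{τ/p}` (`Ω` the parent of `Ω'`); the cells at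
level `l+1` with index `j` have parent `(l, j/2)`. -/
noncomputable def sparsityTau {n d : ℕ} (τ p : ℝ)
    (f : (Fin n → ℝ) → EuclideanSpace ℝ (Fin d))
    (cells : ℕ → ℕ → Set (Fin n → ℝ)) : ℝ≥0∞ :=
  ∑' (l : ℕ) (j : ℕ),
    (‖cellMean f (cells (l + 1) j) - cellMean f (cells l (j / 2))‖₊ : ℝ≥0∞) ^ τ *
      volume (cells (l + 1) j) ^ (τ / p)

/-- The piecewise-constant wavelet of the node `(l, j)`:
`ψ_{Ω₀} = 1_{Ω₀} E⃗_{Ω₀}` at the root, and `ψ_{Ω'} = 1_{Ω'}(E⃗_{Ω'} - E⃗_Ω)` for a child `Ω'`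
of `Ω`. -/
noncomputable def treeWavelet {n d : ℕ} (f : (Fin n → ℝ) → EuclideanSpace ℝ (Fin d))
    (cells : ℕ → ℕ → Set (Fin n → ℝ)) :
    ℕ → ℕ → (Fin n → ℝ) → EuclideanSpace ℝ (Fin d)
  | 0, j => (cells 0 j).indicator fun _ => cellMean f (cells 0 j)
  | (l + 1), j => (cells (l + 1) j).indicator
      fun _ => cellMean f (cells (l + 1) j) - cellMean f (cells l (j / 2))


/-- The `L_p` norm of the wavelet of the non-root node at level `q.1 + 1`, index `q.2`:
`‖ψ_{Ω'}‖_p = ‖E⃗_{Ω'} - E⃗_Ω‖_{ℓ₂} |Ω'|^{1/p}`. -/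
noncomputable def waveletNormP {n d : ℕ} (p : ℝ)
    (f : (Fin n → ℝ) → EuclideanSpace ℝ (Fin d))
    (cells : ℕ → ℕ → Set (Fin n → ℝ)) (q : ℕ × ℕ) : ℝ≥0∞ :=
  (‖cellMean f (cells (q.1 + 1) q.2) - cellMean f (cells q.1 (q.2 / 2))‖₊ : ℝ≥0∞) *
    volume (cells (q.1 + 1) q.2) ^ (1 / p)

section TreeAux

variable {n : ℕ} {cells : ℕ → ℕ → Set (Fin n → ℝ)} {ρ : ℝ}

lemma child_subset (hunion : ∀ l j, cells (l + 1) (2 * j) ∪ cells (l + 1) (2 * j + 1) = cells l j)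
    (l j : ℕ) : cells (l + 1) j ⊆ cells l (j / 2) := by
  have h : j = 2 * (j / 2) ∨ j = 2 * (j / 2) + 1 := by omega
  intro x hx
  rw [← hunion l (j / 2)]
  rcases h with h | h
  · exact Or.inl (h ▸ hx)
  · exact Or.inr (h ▸ hx)

lemma subset_root (h0 : ∀ j, j ≠ 0 → cells 0 j = ∅)
    (hunion : ∀ l j, cells (l + 1) (2 * j) ∪ cells (l + 1) (2 * j + 1) = cells l j)
    (l j : ℕ) : cells l j ⊆ cells 0 0 := by
  induction l generalizing j with
  | zero =>
    rcases eq_or_ne j 0 with rfl | h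
    · exact subset_rfl
    · rw [h0 j h]; exact Set.empty_subset _
  | succ l ih => exact (child_subset hunion l j).trans (ih (j / 2))

lemma level_disjoint (h0 : ∀ j, j ≠ 0 → cells 0 j = ∅)
    (hunion : ∀ l j, cells (l + 1) (2 * j) ∪ cells (l + 1) (2 * j + 1) = cells l j)
    (hdisj : ∀ l j, Disjoint (cells (l + 1) (2 * j)) (cells (l + 1) (2 * j + 1)))
    (l : ℕ) : ∀ j j', j ≠ j' → Disjoint (cells l j) (cells l j') := by
  induction l with
  | zero =>
    intro j j' hne
    rcases eq_or_ne j 0 with rfl | h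
    · rw [h0 j' (Ne.symm hne)]; exact Set.disjoint_empty _
    · rw [h0 j h]; exact Set.empty_disjoint _
  | succ l ih =>
    intro j j' hne
    rcases eq_or_ne (j / 2) (j' / 2) with heq | hne2
    · obtain ⟨m, hm⟩ : ∃ m, (j = 2 * m ∧ j' = 2 * m + 1) ∨ (j' = 2 * m ∧ j = 2 * m + 1) := by
        exact ⟨j / 2, by omega⟩
      rcases hm with ⟨h1, h2⟩ | ⟨h1, h2⟩
      · rw [h1, h2]; exact hdisj l m
      · rw [h1, h2]; exact (hdisj l m).symm
    · exact (ih (j / 2) (j' / 2) hne2).mono (child_subset hunion l j) (child_subset hunion l j')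

lemma ancestor_subset (hunion : ∀ l j, cells (l + 1) (2 * j) ∪ cells (l + 1) (2 * j + 1) = cells l j)
    (l m j : ℕ) : cells (l + m) j ⊆ cells l (j / 2 ^ m) := by
  induction m generalizing j with
  | zero => simp
  | succ m ih =>
    have h1 : cells (l + (m + 1)) j ⊆ cells (l + m) (j / 2) := child_subset hunion (l + m) j
    refine h1.trans ?_
    have := ih (j / 2)
    rwa [Nat.div_div_eq_div_mul, show 2 * 2 ^ m = 2 ^ (m + 1) by ring] at this

lemma vol_ancestor
    (hdecay : ∀ l j, volume (cells (l + 1) j) ≤ ENNReal.ofReal ρ * volume (cells l (j / 2)))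
    (l m j : ℕ) :
    volume (cells (l + m) j) ≤ (ENNReal.ofReal ρ) ^ m * volume (cells l (j / 2 ^ m)) := by
  induction m generalizing j with
  | zero => simp
  | succ m ih =>
    calc volume (cells (l + (m + 1)) j) ≤ ENNReal.ofReal ρ * volume (cells (l + m) (j / 2)) :=
          hdecay (l + m) j
    _ ≤ ENNReal.ofReal ρ * ((ENNReal.ofReal ρ) ^ m * volume (cells l (j / 2 / 2 ^ m))) := by
        gcongr; exact ih (j / 2)
    _ = (ENNReal.ofReal ρ) ^ (m + 1) * volume (cells l (j / 2 ^ (m + 1))) := by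
        rw [Nat.div_div_eq_div_mul, show 2 * 2 ^ m = 2 ^ (m + 1) by ring, pow_succ]
        ring

lemma mem_level_eq (h0 : ∀ j, j ≠ 0 → cells 0 j = ∅)
    (hunion : ∀ l j, cells (l + 1) (2 * j) ∪ cells (l + 1) (2 * j + 1) = cells l j)
    (hdisj : ∀ l j, Disjoint (cells (l + 1) (2 * j)) (cells (l + 1) (2 * j + 1)))
    {l j j' : ℕ} {x : Fin n → ℝ} (hx : x ∈ cells l j) (hx' : x ∈ cells l j') : j = j' := by
  by_contra hne
  exact (level_disjoint h0 hunion hdisj l j j' hne).ne_of_mem hx hx' rfl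

/-- If `x` lies in a cell at level `l` and in a cell at level `l + m`, the deeper cell has
volume at most `ρ^m` times the shallower one. -/
lemma chain_vol (h0 : ∀ j, j ≠ 0 → cells 0 j = ∅)
    (hunion : ∀ l j, cells (l + 1) (2 * j) ∪ cells (l + 1) (2 * j + 1) = cells l j)
    (hdisj : ∀ l j, Disjoint (cells (l + 1) (2 * j)) (cells (l + 1) (2 * j + 1)))
    (hdecay : ∀ l j, volume (cells (l + 1) j) ≤ ENNReal.ofReal ρ * volume (cells l (j / 2)))
    {l m j j' : ℕ} {x : Fin n → ℝ} (hx : x ∈ cells l j) (hx' : x ∈ cells (l + m) j') :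
    volume (cells (l + m) j') ≤ (ENNReal.ofReal ρ) ^ m * volume (cells l j) := by
  have h1 := vol_ancestor (ρ := ρ) hdecay l m j'
  have h2 : x ∈ cells l (j' / 2 ^ m) := ancestor_subset hunion l m j' hx'
  rwa [mem_level_eq h0 hunion hdisj h2 hx] at h1

end TreeAux

lemma ennreal_inv_le_mul_inv {a b c : ℝ≥0∞} (hc0 : c ≠ 0) (hct : c ≠ ∞) (h : b ≤ c * a) :
    a⁻¹ ≤ c * b⁻¹ := by
  calc a⁻¹ = c * c⁻¹ * a⁻¹ := by rw [ENNReal.mul_inv_cancel hc0 hct, one_mul]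
  _ = c * (c * a)⁻¹ := by
      rw [mul_assoc, ENNReal.mul_inv (Or.inl hc0) (Or.inl hct)]
  _ ≤ c * b⁻¹ := by gcongr

lemma ennreal_inv_mul_le_one {a b : ℝ≥0∞} (h : b ≤ a) : a⁻¹ * b ≤ 1 := by
  rcases eq_or_ne a 0 with rfl | ha0
  · simp [le_antisymm h (zero_le)]
  rcases eq_or_ne a ∞ with rfl | hat
  · simp
  calc a⁻¹ * b ≤ a⁻¹ * a := by gcongr
  _ = 1 := ENNReal.inv_mul_cancel ha0 hat

section Block

variable {n d : ℕ}

/-- The cell of the non-root node `q`. -/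
def wcell (cells : ℕ → ℕ → Set (Fin n → ℝ)) (q : ℕ × ℕ) : Set (Fin n → ℝ) :=
  cells (q.1 + 1) q.2

/-- The coefficient of the wavelet of the non-root node `q`. -/
noncomputable def wcoef (f : (Fin n → ℝ) → EuclideanSpace ℝ (Fin d))
    (cells : ℕ → ℕ → Set (Fin n → ℝ)) (q : ℕ × ℕ) : EuclideanSpace ℝ (Fin d) :=
  cellMean f (cells (q.1 + 1) q.2) - cellMean f (cells q.1 (q.2 / 2))

lemma treeWavelet_eq (f : (Fin n → ℝ) → EuclideanSpace ℝ (Fin d))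
    (cells : ℕ → ℕ → Set (Fin n → ℝ)) (q : ℕ × ℕ) :
    treeWavelet f cells (q.1 + 1) q.2 = (wcell cells q).indicator (fun _ => wcoef f cells q) :=
  rfl

lemma waveletNormP_eq (p : ℝ) (f : (Fin n → ℝ) → EuclideanSpace ℝ (Fin d))
    (cells : ℕ → ℕ → Set (Fin n → ℝ)) (q : ℕ × ℕ) :
    waveletNormP p f cells q =
      (‖wcoef f cells q‖₊ : ℝ≥0∞) * volume (wcell cells q) ^ (1 / p) :=
  rfl

variable {cells : ℕ → ℕ → Set (Fin n → ℝ)} {ρ p : ℝ}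

/-- Core block estimate. -/
lemma block_bound (hρ0 : 0 < ρ) (hρ1 : ρ < 1) (hp : 1 ≤ p)
    (f : (Fin n → ℝ) → EuclideanSpace ℝ (Fin d))
    (hmeas : ∀ l j, MeasurableSet (cells l j))
    (h0 : ∀ j, j ≠ 0 → cells 0 j = ∅)
    (hunion : ∀ l j, cells (l + 1) (2 * j) ∪ cells (l + 1) (2 * j + 1) = cells l j)
    (hdisj : ∀ l j, Disjoint (cells (l + 1) (2 * j)) (cells (l + 1) (2 * j + 1)))
    (hdecay : ∀ l j, volume (cells (l + 1) j) ≤ ENNReal.ofReal ρ * volume (cells l (j / 2)))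
    (hvol : volume (cells 0 0) < ⊤)
    (Λ : Finset (ℕ × ℕ)) (ε : ℝ≥0∞)
    (hε : ∀ q ∈ Λ, waveletNormP p f cells q ≤ ε) :
    eLpNorm (fun x => ∑ q ∈ Λ, treeWavelet f cells (q.1 + 1) q.2 x) (ENNReal.ofReal p)
        (volume.restrict (cells 0 0))
      ≤ (Λ.card : ℝ≥0∞) ^ (1 / p) * ((1 - (ENNReal.ofReal ρ) ^ (1 / p))⁻¹ * ε) := by
  classical
  have hp0 : (0:ℝ) < p := lt_of_lt_of_le one_pos hp
  set r1 : ℝ≥0∞ := (ENNReal.ofReal ρ) ^ (1 / p) with hr1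
  have hr1lt : r1 < 1 :=
    ENNReal.rpow_lt_one (by simpa using ENNReal.ofReal_lt_one.2 hρ1) (by positivity)
  have hr10 : r1 ≠ 0 := by
    rw [hr1]
    simp [ENNReal.rpow_eq_zero_iff, ENNReal.ofReal_eq_zero, not_le.2 hρ0,
      not_lt.2 (by positivity : (0:ℝ) ≤ 1 / p)]
  have hr1t : r1 ≠ ∞ := (hr1lt.trans ENNReal.one_lt_top).ne
  set K : ℝ≥0∞ := (1 - r1)⁻¹ with hK
  set Z : Set (Fin n → ℝ) := ⋃ q ∈ Λ, {x | x ∈ wcell cells q ∧ volume (wcell cells q) = 0}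
    with hZ
  have hZ0 : volume Z = 0 := by
    refine le_antisymm (le_trans (measure_biUnion_finset_le Λ _) ?_) (zero_le)
    refine le_trans (Finset.sum_le_sum (fun q _ => ?_))
      (by simp : ∑ _q ∈ Λ, (0:ℝ≥0∞) ≤ 0)
    rcases eq_or_ne (volume (wcell cells q)) 0 with h | h
    · exact le_trans (measure_mono (fun x hx => hx.1)) h.le
    · have he : {x | x ∈ wcell cells q ∧ volume (wcell cells q) = 0} = ∅ := by
        ext x; simp [h]
      simp [he]
  have hcellsub : ∀ q : ℕ × ℕ, wcell cells q ⊆ cells 0 0 :=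
    fun q => subset_root h0 hunion _ _
  have hvolfin : ∀ q : ℕ × ℕ, volume (wcell cells q) ≠ ∞ :=
    fun q => (lt_of_le_of_lt (measure_mono (hcellsub q)) hvol).ne
  set E : ℕ × ℕ → Set (Fin n → ℝ) := fun q =>
    (cells 0 0 ∩ wcell cells q) \ ⋃ q' ∈ Λ.filter (fun q' => q.1 < q'.1), wcell cells q'
    with hE
  have hEmeas : ∀ q, MeasurableSet (E q) := fun q =>
    ((hmeas 0 0).inter (hmeas _ _)).diff
      (Finset.measurableSet_biUnion _ (fun q' _ => hmeas _ _))
  have hEsub : ∀ q, E q ⊆ wcell cells q := fun q x hx => hx.1.2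
  -- pointwise claim
  have claim : ∀ x ∈ cells 0 0, x ∉ Z →
      (‖∑ q ∈ Λ, treeWavelet f cells (q.1 + 1) q.2 x‖₊ : ℝ≥0∞) ^ p ≤
      ∑ q ∈ Λ, (E q).indicator
        (fun _ => (K * ε) ^ p * (volume (wcell cells q))⁻¹) x := by
    intro x hx00 hxZ
    by_cases hS : ∀ q ∈ Λ, x ∉ wcell cells q
    · have hz : ∀ q ∈ Λ, treeWavelet f cells (q.1 + 1) q.2 x = 0 := fun q hq => by
        rw [treeWavelet_eq]; exact Set.indicator_of_notMem (hS q hq) _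
      rw [Finset.sum_congr rfl hz]
      simp [ENNReal.zero_rpow_of_pos hp0]
    push_neg at hS
    set S : Finset (ℕ × ℕ) := Λ.filter (fun q => x ∈ wcell cells q) with hSdef
    have hSne : S.Nonempty := by
      obtain ⟨q, hqΛ, hqx⟩ := hS
      exact ⟨q, Finset.mem_filter.2 ⟨hqΛ, hqx⟩⟩
    obtain ⟨q', hq'S, hmax⟩ := S.exists_max_image (fun q => q.1) hSne
    have hq'Λ : q' ∈ Λ := (Finset.mem_filter.1 hq'S).1
    have hxq' : x ∈ wcell cells q' := (Finset.mem_filter.1 hq'S).2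
    have hvolpos : ∀ q ∈ S, volume (wcell cells q) ≠ 0 := by
      intro q hq hv
      exact hxZ (Set.mem_biUnion (Finset.mem_filter.1 hq).1
        ⟨(Finset.mem_filter.1 hq).2, hv⟩)
    have hxE : x ∈ E q' := by
      refine ⟨⟨hx00, hxq'⟩, ?_⟩
      intro hmem
      obtain ⟨q'', hq''⟩ := Set.mem_iUnion.1 hmem
      obtain ⟨hq''f, hxq''⟩ := Set.mem_iUnion.1 hq''
      have h1 := Finset.mem_filter.1 hq''f
      have h2 : q''.1 ≤ q'.1 := hmax q'' (Finset.mem_filter.2 ⟨h1.1, hxq''⟩)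
      have := h1.2
      omega
    have step1 : (‖∑ q ∈ Λ, treeWavelet f cells (q.1 + 1) q.2 x‖₊ : ℝ≥0∞) ≤
        ∑ q ∈ S, (‖wcoef f cells q‖₊ : ℝ≥0∞) := by
      have hsum : ∑ q ∈ Λ, treeWavelet f cells (q.1 + 1) q.2 x
          = ∑ q ∈ S, treeWavelet f cells (q.1 + 1) q.2 x := by
        refine (Finset.sum_subset (Finset.filter_subset _ _) ?_).symm
        intro q hqΛ hqS
        rw [treeWavelet_eq]
        exact Set.indicator_of_notMem
          (fun hxq => hqS (Finset.mem_filter.2 ⟨hqΛ, hxq⟩)) _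
      rw [hsum]
      calc (‖∑ q ∈ S, treeWavelet f cells (q.1 + 1) q.2 x‖₊ : ℝ≥0∞)
          ≤ ∑ q ∈ S, (‖treeWavelet f cells (q.1 + 1) q.2 x‖₊ : ℝ≥0∞) := by
            rw [← ENNReal.coe_finset_sum]
            exact ENNReal.coe_le_coe.2 (nnnorm_sum_le _ _)
      _ = ∑ q ∈ S, (‖wcoef f cells q‖₊ : ℝ≥0∞) := by
            refine Finset.sum_congr rfl (fun q hq => ?_)
            rw [treeWavelet_eq, Set.indicator_of_mem (Finset.mem_filter.1 hq).2]
    set A : ℝ≥0∞ := ((volume (wcell cells q')) ^ (1 / p))⁻¹ with hA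
    have step2 : ∀ q ∈ S, (‖wcoef f cells q‖₊ : ℝ≥0∞) ≤
        ε * (r1 ^ (q'.1 - q.1) * A) := by
      intro q hq
      have hxq : x ∈ wcell cells q := (Finset.mem_filter.1 hq).2
      have hlev : q.1 ≤ q'.1 := hmax q hq
      have hq0 : volume (wcell cells q) ≠ 0 := hvolpos q hq
      have hrp0 : (volume (wcell cells q)) ^ (1 / p) ≠ 0 := by
        simp [ENNReal.rpow_eq_zero_iff, hq0, hvolfin q,
          not_lt.2 (by positivity : (0:ℝ) ≤ 1 / p)]
      have hrpt : (volume (wcell cells q)) ^ (1 / p) ≠ ∞ := by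
        simp [ENNReal.rpow_eq_top_iff, hq0, hvolfin q,
          not_lt.2 (by positivity : (0:ℝ) ≤ 1 / p)]
      have h1 : (‖wcoef f cells q‖₊ : ℝ≥0∞) ≤ ε / (volume (wcell cells q)) ^ (1 / p) :=
        (ENNReal.le_div_iff_mul_le (Or.inl hrp0) (Or.inl hrpt)).2
          (by rw [← waveletNormP_eq]; exact hε q (Finset.mem_filter.1 hq).1)
      have hx'' : x ∈ cells ((q.1 + 1) + (q'.1 - q.1)) q'.2 := by
        rw [show (q.1 + 1) + (q'.1 - q.1) = q'.1 + 1 by omega]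
        exact hxq'
      have hchain : volume (wcell cells q') ≤
          (ENNReal.ofReal ρ) ^ (q'.1 - q.1) * volume (wcell cells q) := by
        have hcv := chain_vol h0 hunion hdisj hdecay hxq hx''
        rwa [show (q.1 + 1) + (q'.1 - q.1) = q'.1 + 1 by omega] at hcv
      have hpow : (volume (wcell cells q')) ^ (1 / p) ≤
          r1 ^ (q'.1 - q.1) * (volume (wcell cells q)) ^ (1 / p) := by
        calc (volume (wcell cells q')) ^ (1 / p)
            ≤ ((ENNReal.ofReal ρ) ^ (q'.1 - q.1) * volume (wcell cells q)) ^ (1 / p) :=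
              ENNReal.rpow_le_rpow hchain (by positivity)
        _ = r1 ^ (q'.1 - q.1) * (volume (wcell cells q)) ^ (1 / p) := by
            rw [ENNReal.mul_rpow_of_nonneg _ _ (by positivity : (0:ℝ) ≤ 1 / p)]
            congr 1
            rw [hr1, ← ENNReal.rpow_natCast ((ENNReal.ofReal ρ) ^ (1 / p)),
              ← ENNReal.rpow_natCast (ENNReal.ofReal ρ), ← ENNReal.rpow_mul,
              ← ENNReal.rpow_mul, mul_comm]
      have hinv : ((volume (wcell cells q)) ^ (1 / p))⁻¹ ≤ r1 ^ (q'.1 - q.1) * A :=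
        ennreal_inv_le_mul_inv (pow_ne_zero _ hr10) (ENNReal.pow_ne_top hr1t) hpow
      calc (‖wcoef f cells q‖₊ : ℝ≥0∞) ≤ ε / (volume (wcell cells q)) ^ (1 / p) := h1
      _ = ε * ((volume (wcell cells q)) ^ (1 / p))⁻¹ := by rw [div_eq_mul_inv]
      _ ≤ ε * (r1 ^ (q'.1 - q.1) * A) := by gcongr
    have hsum_r1 : ∑ q ∈ S, r1 ^ (q'.1 - q.1) ≤ K := by
      have hinj : ∀ a ∈ S, ∀ b ∈ S,
          q'.1 - a.1 = q'.1 - b.1 → a = b := by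
        intro a ha b hb hab
        have h1 : a.1 ≤ q'.1 := hmax a ha
        have h2 : b.1 ≤ q'.1 := hmax b hb
        have hl : a.1 = b.1 := by omega
        have hxa : x ∈ cells (a.1 + 1) a.2 := (Finset.mem_filter.1 ha).2
        have hxb : x ∈ cells (a.1 + 1) b.2 := by
          rw [hl]; exact (Finset.mem_filter.1 hb).2
        have h3 : a.2 = b.2 := mem_level_eq h0 hunion hdisj hxa hxb
        exact Prod.ext hl h3
      calc ∑ q ∈ S, r1 ^ (q'.1 - q.1)
          = ∑ m ∈ S.image (fun q => q'.1 - q.1), r1 ^ m := (Finset.sum_image hinj).symm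
      _ ≤ ∑' m : ℕ, r1 ^ m := ENNReal.sum_le_tsum _
      _ = K := ENNReal.tsum_geometric r1
    have hAp : A ^ p = (volume (wcell cells q'))⁻¹ := by
      rw [hA, ENNReal.inv_rpow, ← ENNReal.rpow_mul, one_div_mul_cancel hp0.ne',
        ENNReal.rpow_one]
    calc (‖∑ q ∈ Λ, treeWavelet f cells (q.1 + 1) q.2 x‖₊ : ℝ≥0∞) ^ p
        ≤ (∑ q ∈ S, (‖wcoef f cells q‖₊ : ℝ≥0∞)) ^ p :=
          ENNReal.rpow_le_rpow step1 hp0.le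
    _ ≤ (∑ q ∈ S, ε * (r1 ^ (q'.1 - q.1) * A)) ^ p :=
          ENNReal.rpow_le_rpow (Finset.sum_le_sum step2) hp0.le
    _ = ((ε * A) * ∑ q ∈ S, r1 ^ (q'.1 - q.1)) ^ p := by
          rw [Finset.mul_sum]
          congr 1
          exact Finset.sum_congr rfl (fun q _ => by ring)
    _ ≤ ((ε * A) * K) ^ p := ENNReal.rpow_le_rpow (by gcongr) hp0.le
    _ = (K * ε) ^ p * (volume (wcell cells q'))⁻¹ := by
          rw [ENNReal.mul_rpow_of_nonneg _ _ hp0.le,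
            ENNReal.mul_rpow_of_nonneg ε A hp0.le,
            ENNReal.mul_rpow_of_nonneg K ε hp0.le, hAp]
          ring
    _ = (E q').indicator (fun _ => (K * ε) ^ p * (volume (wcell cells q'))⁻¹) x := by
          rw [Set.indicator_of_mem hxE]
    _ ≤ ∑ q ∈ Λ, (E q).indicator
          (fun _ => (K * ε) ^ p * (volume (wcell cells q))⁻¹) x :=
          Finset.single_le_sum
            (f := fun q => (E q).indicator
              (fun _ => (K * ε) ^ p * (volume (wcell cells q))⁻¹) x)
            (fun q _ => zero_le) hq'Λ
  -- integrate
  have hbound : ∫⁻ x, (‖∑ q ∈ Λ, treeWavelet f cells (q.1 + 1) q.2 x‖₊ : ℝ≥0∞) ^ p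
        ∂(volume.restrict (cells 0 0))
      ≤ (Λ.card : ℝ≥0∞) * (K * ε) ^ p := by
    have hae1 : ∀ᵐ x ∂(volume.restrict (cells 0 0)), x ∈ cells 0 0 :=
      ae_restrict_mem (hmeas 0 0)
    have hae2 : ∀ᵐ x ∂(volume.restrict (cells 0 0)), x ∉ Z :=
      measure_eq_zero_iff_ae_notMem.1
        (le_antisymm (le_trans (Measure.restrict_apply_le _ _) hZ0.le) (zero_le))
    refine le_trans (lintegral_mono_ae
      (g := fun x => ∑ q ∈ Λ, (E q).indicator
        (fun _ => (K * ε) ^ p * (volume (wcell cells q))⁻¹) x) ?_) ?_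
    · filter_upwards [hae1, hae2] with x h1 h2
      exact claim x h1 h2
    · rw [lintegral_finset_sum _ (fun q _ => measurable_const.indicator (hEmeas q))]
      refine le_trans (Finset.sum_le_sum (g := fun _ => (K * ε) ^ p) (fun q _ => ?_)) ?_
      · show ∫⁻ x, (E q).indicator (fun _ => (K * ε) ^ p * (volume (wcell cells q))⁻¹) x
            ∂(volume.restrict (cells 0 0)) ≤ (K * ε) ^ p
        rw [lintegral_indicator_const (hEmeas q)]
        calc (K * ε) ^ p * (volume (wcell cells q))⁻¹ * (volume.restrict (cells 0 0)) (E q)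
            ≤ (K * ε) ^ p * (volume (wcell cells q))⁻¹ * volume (wcell cells q) := by
              have hr1' : (volume.restrict (cells 0 0)) (E q) ≤ volume (E q) :=
                Measure.restrict_apply_le _ _
              have hr2' : volume (E q) ≤ volume (wcell cells q) :=
                measure_mono (hEsub q)
              exact mul_le_mul_right (le_trans hr1' hr2') _
        _ = (K * ε) ^ p * ((volume (wcell cells q))⁻¹ * volume (wcell cells q)) :=
              mul_assoc _ _ _
        _ ≤ (K * ε) ^ p * 1 := by
              gcongr
              exact ennreal_inv_mul_le_one le_rfl
        _ = (K * ε) ^ p := mul_one _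
      · rw [Finset.sum_const, nsmul_eq_mul]
  have hP0 : (ENNReal.ofReal p) ≠ 0 := by
    simp [ENNReal.ofReal_eq_zero, not_le.2 hp0]
  have hPr : (ENNReal.ofReal p).toReal = p := ENNReal.toReal_ofReal hp0.le
  rw [eLpNorm_eq_lintegral_rpow_enorm_toReal hP0 ENNReal.ofReal_ne_top, hPr]
  calc (∫⁻ x, (‖∑ q ∈ Λ, treeWavelet f cells (q.1 + 1) q.2 x‖₊ : ℝ≥0∞) ^ p
        ∂(volume.restrict (cells 0 0))) ^ (1 / p)
      ≤ ((Λ.card : ℝ≥0∞) * (K * ε) ^ p) ^ (1 / p) :=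
        ENNReal.rpow_le_rpow hbound (by positivity)
  _ = (Λ.card : ℝ≥0∞) ^ (1 / p) * (K * ε) := by
        rw [ENNReal.mul_rpow_of_nonneg _ _ (by positivity : (0:ℝ) ≤ 1 / p),
          ← ENNReal.rpow_mul, mul_one_div_cancel hp0.ne', ENNReal.rpow_one]

end Block


/-- Jackson estimate for a single tree, `r = 1`: if the tree satisfies the geometric decay
condition with parameter `ρ`, `f = Σ_{Ω∈𝒯} ψ_Ω`, `N_τ(f,𝒯) < ∞` with `1/τ = α + 1/p`, and
`f_M` keeps (besides the root term) the `M` wavelets of largest `L_p` norm (enumerated by a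
bijection `e` with non-increasing norms), then `‖f - f_M‖_p ≤ C(p,α,ρ) M^{-α} N_τ(f,𝒯)`,
with `C` independent of the dimension `n`. -/
theorem stmt_11 (ρ p α τ : ℝ) (hρ0 : 0 < ρ) (hρ1 : ρ < 1) (hp : 1 ≤ p) (hα : 0 < α)
    (hτ0 : 0 < τ) (hτ : 1 / τ = α + 1 / p) :
    ∃ C : ℝ, 0 < C ∧
      ∀ (n d : ℕ) (cells : ℕ → ℕ → Set (Fin n → ℝ))
        (f : (Fin n → ℝ) → EuclideanSpace ℝ (Fin d)) (e : ℕ ≃ ℕ × ℕ) (M : ℕ),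
        (∀ l j, MeasurableSet (cells l j)) →
        (∀ j, j ≠ 0 → cells 0 j = ∅) →
        (∀ l j, cells (l + 1) (2 * j) ∪ cells (l + 1) (2 * j + 1) = cells l j) →
        (∀ l j, Disjoint (cells (l + 1) (2 * j)) (cells (l + 1) (2 * j + 1))) →
        (∀ l j, volume (cells (l + 1) j) ≤ ENNReal.ofReal ρ * volume (cells l (j / 2))) →
        volume (cells 0 0) < ⊤ →
        IntegrableOn f (cells 0 0) →
        (∀ x ∈ cells 0 0,
          HasSum (fun q : ℕ × ℕ => treeWavelet f cells q.1 q.2 x) (f x)) →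
        (∀ k k', k ≤ k' → waveletNormP p f cells (e k') ≤ waveletNormP p f cells (e k)) →
        sparsityTau τ p f cells < ⊤ →
        1 ≤ M →
        eLpNorm
            (fun x => f x - (treeWavelet f cells 0 0 x +
              ∑ k ∈ Finset.range M, treeWavelet f cells ((e k).1 + 1) (e k).2 x))
            (ENNReal.ofReal p) (volume.restrict (cells 0 0))
          ≤ ENNReal.ofReal (C * (M : ℝ) ^ (-α)) * sparsityTau τ p f cells ^ (1 / τ) := by
  classical
  have hp0 : (0:ℝ) < p := lt_of_lt_of_le one_pos hp
  have hρp1 : ρ ^ (1 / p) < 1 := Real.rpow_lt_one hρ0.le hρ1 (by positivity)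
  have hρpp : (0:ℝ) < ρ ^ (1 / p) := Real.rpow_pos_of_pos hρ0 _
  have h2α1 : (2:ℝ) ^ (-α) < 1 := Real.rpow_lt_one_of_one_lt_of_neg one_lt_two (by linarith)
  have h2αp : (0:ℝ) < (2:ℝ) ^ (-α) := Real.rpow_pos_of_pos two_pos _
  set Cρ : ℝ := (1 - ρ ^ (1 / p))⁻¹ with hCρ
  set C2 : ℝ := (1 - (2:ℝ) ^ (-α))⁻¹ with hC2
  have hCρpos : 0 < Cρ := by rw [hCρ]; exact inv_pos.2 (by linarith)
  have hC2pos : 0 < C2 := by rw [hC2]; exact inv_pos.2 (by linarith)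
  refine ⟨Cρ * C2, by positivity, ?_⟩
  intro n d cells f e M hmeas h0 hunion hdisj hdecay hvol hint hsum horder hspar hM
  set N : ℝ≥0∞ := sparsityTau τ p f cells with hN
  set P : ℝ≥0∞ := ENNReal.ofReal p with hP
  have hP1 : 1 ≤ P := by
    rw [hP, ← ENNReal.ofReal_one]
    exact ENNReal.ofReal_le_ofReal hp
  set ψ : ℕ → (Fin n → ℝ) → EuclideanSpace ℝ (Fin d) :=
    fun k => treeWavelet f cells ((e k).1 + 1) (e k).2 with hψ
  have hψmeas : ∀ k, StronglyMeasurable (ψ k) := fun k =>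
    stronglyMeasurable_const.indicator (hmeas ((e k).1 + 1) (e k).2)
  -- Step A: ordering of wavelet norms
  have hτsum : ∑' q : ℕ × ℕ, waveletNormP p f cells q ^ τ = N := by
    rw [hN, sparsityTau, ENNReal.tsum_prod']
    refine tsum_congr fun l => tsum_congr fun j => ?_
    rw [waveletNormP_eq, ENNReal.mul_rpow_of_nonneg _ _ hτ0.le, ← ENNReal.rpow_mul,
      show 1 / p * τ = τ / p by ring]
    rfl
  have hwnp : ∀ m k : ℕ, 0 < m → m ≤ k + 1 →
      waveletNormP p f cells (e k) ≤ N ^ (1 / τ) * (m : ℝ≥0∞) ^ (-(1 / τ)) := by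
    intro m k hm hmk
    have hA : ((k:ℝ≥0∞) + 1) * waveletNormP p f cells (e k) ^ τ ≤ N := by
      calc ((k:ℝ≥0∞) + 1) * waveletNormP p f cells (e k) ^ τ
          = ∑ _i ∈ Finset.range (k + 1), waveletNormP p f cells (e k) ^ τ := by
            rw [Finset.sum_const, Finset.card_range, nsmul_eq_mul]
            push_cast
            ring
      _ ≤ ∑ i ∈ Finset.range (k + 1), waveletNormP p f cells (e i) ^ τ := by
            refine Finset.sum_le_sum fun i hi => ?_
            exact ENNReal.rpow_le_rpow
              (horder i k (Nat.lt_succ_iff.1 (Finset.mem_range.1 hi))) hτ0.le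
      _ ≤ ∑' i : ℕ, waveletNormP p f cells (e i) ^ τ := ENNReal.sum_le_tsum _
      _ = ∑' q : ℕ × ℕ, waveletNormP p f cells q ^ τ :=
            e.tsum_eq (fun q => waveletNormP p f cells q ^ τ)
      _ = N := hτsum
    have hm' : (m : ℝ≥0∞) ≤ (k:ℝ≥0∞) + 1 := by
      have : ((m:ℕ) : ℝ≥0∞) ≤ ((k+1 : ℕ) : ℝ≥0∞) := Nat.cast_le.2 hmk
      simpa using this
    have hk0 : ((k:ℝ≥0∞) + 1) ≠ 0 := by simp
    have hkt : ((k:ℝ≥0∞) + 1) ≠ ∞ := by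
      simp [ENNReal.add_eq_top]
    have h1 : waveletNormP p f cells (e k) ^ τ ≤ N / ((k:ℝ≥0∞) + 1) :=
      (ENNReal.le_div_iff_mul_le (Or.inl hk0) (Or.inl hkt)).2
        (by rw [mul_comm]; exact hA)
    have h2 : waveletNormP p f cells (e k) ^ τ ≤ N / (m : ℝ≥0∞) :=
      h1.trans (ENNReal.div_le_div_left hm' N)
    have h3 : waveletNormP p f cells (e k) ≤ (N / (m : ℝ≥0∞)) ^ (1 / τ) := by
      have := ENNReal.rpow_le_rpow h2 (by positivity : (0:ℝ) ≤ 1 / τ)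
      rwa [← ENNReal.rpow_mul, mul_one_div_cancel hτ0.ne', ENNReal.rpow_one] at this
    calc waveletNormP p f cells (e k) ≤ (N / (m : ℝ≥0∞)) ^ (1 / τ) := h3
    _ = N ^ (1 / τ) * (m : ℝ≥0∞) ^ (-(1 / τ)) := by
        rw [ENNReal.div_rpow_of_nonneg _ _ (by positivity : (0:ℝ) ≤ 1 / τ),
          div_eq_mul_inv, ENNReal.rpow_neg]
  -- Step B: block bounds
  set r2 : ℝ≥0∞ := (2:ℝ≥0∞) ^ (-α) with hr2
  set Kρ' : ℝ≥0∞ := (1 - (ENNReal.ofReal ρ) ^ (1 / p))⁻¹ with hKρ'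
  set B : ℝ≥0∞ := Kρ' * (N ^ (1 / τ) * (M : ℝ≥0∞) ^ (-α)) with hB
  have hM0 : (0:ℕ) < M := by omega
  have hMcast : ∀ s : ℕ, ((M * 2 ^ s : ℕ) : ℝ≥0∞) = (M : ℝ≥0∞) * ((2:ℝ≥0∞)) ^ s := by
    intro s; push_cast; ring
  have hblock : ∀ s : ℕ,
      eLpNorm (fun x => ∑ k ∈ Finset.Ico (M * 2 ^ s) (M * 2 ^ (s + 1)), ψ k x) P
        (volume.restrict (cells 0 0)) ≤ B * r2 ^ s := by
    intro s
    have hm0 : 0 < M * 2 ^ s := by positivity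
    set Λs : Finset (ℕ × ℕ) := (Finset.Ico (M * 2 ^ s) (M * 2 ^ (s + 1))).image (fun k => e k)
      with hΛ
    have hcard : Λs.card = M * 2 ^ s := by
      rw [hΛ, Finset.card_image_of_injective _ e.injective, Nat.card_Ico]
      have h2 : M * 2 ^ (s + 1) = M * 2 ^ s + M * 2 ^ s := by rw [pow_succ]; ring
      omega
    set εs : ℝ≥0∞ := N ^ (1 / τ) * ((M * 2 ^ s : ℕ) : ℝ≥0∞) ^ (-(1 / τ)) with hεs
    have hε : ∀ q ∈ Λs, waveletNormP p f cells q ≤ εs := by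
      intro q hq
      rw [hΛ, Finset.mem_image] at hq
      obtain ⟨k, hk, rfl⟩ := hq
      have hk' : M * 2 ^ s ≤ k := (Finset.mem_Ico.1 hk).1
      exact hwnp (M * 2 ^ s) k hm0 (by omega)
    have hbb := block_bound hρ0 hρ1 hp f hmeas h0 hunion hdisj hdecay hvol Λs εs hε
    have hsum_eq : (fun x => ∑ k ∈ Finset.Ico (M * 2 ^ s) (M * 2 ^ (s + 1)), ψ k x)
        = fun x => ∑ q ∈ Λs, treeWavelet f cells (q.1 + 1) q.2 x := by
      funext x
      rw [hΛ, Finset.sum_image (fun a _ b _ h => e.injective h)]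
    have hm' : ((M * 2 ^ s : ℕ) : ℝ≥0∞) ≠ 0 := by
      simp only [ne_eq, Nat.cast_eq_zero]
      omega
    have hmt : ((M * 2 ^ s : ℕ) : ℝ≥0∞) ≠ ∞ := ENNReal.natCast_ne_top _
    have hexp : ((M * 2 ^ s : ℕ) : ℝ≥0∞) ^ (1 / p) * ((M * 2 ^ s : ℕ) : ℝ≥0∞) ^ (-(1 / τ))
        = (M : ℝ≥0∞) ^ (-α) * r2 ^ s := by
      rw [← ENNReal.rpow_add _ _ hm' hmt, show 1 / p + -(1 / τ) = -α by linarith [hτ],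
        hMcast s, ENNReal.mul_rpow_of_ne_zero (by exact_mod_cast hM0.ne') (by positivity),
        hr2]
      congr 1
      rw [← ENNReal.rpow_natCast (2:ℝ≥0∞) s,
        ← ENNReal.rpow_natCast ((2:ℝ≥0∞) ^ (-α)) s, ← ENNReal.rpow_mul,
        ← ENNReal.rpow_mul, mul_comm]
    rw [hsum_eq]
    calc eLpNorm (fun x => ∑ q ∈ Λs, treeWavelet f cells (q.1 + 1) q.2 x) P
          (volume.restrict (cells 0 0))
        ≤ (Λs.card : ℝ≥0∞) ^ (1 / p) * (Kρ' * εs) := hbb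
    _ = B * r2 ^ s := by
        rw [hcard, hεs, hB]
        calc ((M * 2 ^ s : ℕ) : ℝ≥0∞) ^ (1 / p) *
              (Kρ' * (N ^ (1 / τ) * ((M * 2 ^ s : ℕ) : ℝ≥0∞) ^ (-(1 / τ))))
            = Kρ' * N ^ (1 / τ) *
              (((M * 2 ^ s : ℕ) : ℝ≥0∞) ^ (1 / p) *
                ((M * 2 ^ s : ℕ) : ℝ≥0∞) ^ (-(1 / τ))) := by ring
        _ = Kρ' * N ^ (1 / τ) * ((M : ℝ≥0∞) ^ (-α) * r2 ^ s) := by rw [hexp]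
        _ = Kρ' * (N ^ (1 / τ) * (M : ℝ≥0∞) ^ (-α)) * r2 ^ s := by ring
  -- Step C: partial tails
  have hP0 : P ≠ 0 := by
    rw [hP]
    simp [ENNReal.ofReal_eq_zero, not_le.2 hp0]
  have hPt : P ≠ ∞ := by rw [hP]; exact ENNReal.ofReal_ne_top
  have hPr : P.toReal = p := by rw [hP]; exact ENNReal.toReal_ofReal hp0.le
  have hpsum : ∀ S : ℕ,
      eLpNorm (fun x => ∑ k ∈ Finset.Ico M (M * 2 ^ S), ψ k x) P
        (volume.restrict (cells 0 0)) ≤ B * (1 - r2)⁻¹ := by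
    have key : ∀ S : ℕ,
        eLpNorm (fun x => ∑ k ∈ Finset.Ico M (M * 2 ^ S), ψ k x) P
          (volume.restrict (cells 0 0)) ≤ ∑ s ∈ Finset.range S, B * r2 ^ s := by
      intro S
      induction S with
      | zero =>
        simp only [pow_zero, mul_one, Finset.Ico_self, Finset.sum_empty,
          Finset.range_zero]
        simp [eLpNorm_zero']
      | succ S ih =>
        have hle1 : M ≤ M * 2 ^ S := Nat.le_mul_of_pos_right M (by positivity)
        have hle2 : M * 2 ^ S ≤ M * 2 ^ (S + 1) :=
          Nat.mul_le_mul_left M (Nat.pow_le_pow_right (by norm_num) (by omega))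
        have hsplit : (fun x => ∑ k ∈ Finset.Ico M (M * 2 ^ (S + 1)), ψ k x)
            = (fun x => (∑ k ∈ Finset.Ico M (M * 2 ^ S), ψ k x) +
                ∑ k ∈ Finset.Ico (M * 2 ^ S) (M * 2 ^ (S + 1)), ψ k x) := by
          funext x
          rw [Finset.sum_Ico_consecutive _ hle1 hle2]
        rw [hsplit, Finset.sum_range_succ]
        refine le_trans (eLpNorm_add_le ?_ ?_ hP1) (add_le_add ih (hblock S))
        · exact (Finset.stronglyMeasurable_fun_sum _ fun k _ => hψmeas k).aestronglyMeasurable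
        · exact (Finset.stronglyMeasurable_fun_sum _ fun k _ => hψmeas k).aestronglyMeasurable
    intro S
    refine (key S).trans ?_
    calc ∑ s ∈ Finset.range S, B * r2 ^ s = B * ∑ s ∈ Finset.range S, r2 ^ s := by
          rw [Finset.mul_sum]
    _ ≤ B * ∑' s : ℕ, r2 ^ s := by gcongr; exact ENNReal.sum_le_tsum _
    _ = B * (1 - r2)⁻¹ := by rw [ENNReal.tsum_geometric]
  -- Step D: pointwise convergence
  have htend : ∀ x ∈ cells 0 0,
      Filter.Tendsto (fun S : ℕ => ∑ k ∈ Finset.Ico M (M * 2 ^ S), ψ k x) Filter.atTop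
        (nhds (f x - (treeWavelet f cells 0 0 x + ∑ k ∈ Finset.range M, ψ k x))) := by
    intro x hx
    have hroot : HasSum (fun q : ℕ × ℕ =>
        if q = ((0, 0) : ℕ × ℕ) then treeWavelet f cells 0 0 x else 0)
        (treeWavelet f cells 0 0 x) := hasSum_ite_eq _ _
    have h2 : HasSum (fun q : ℕ × ℕ => treeWavelet f cells q.1 q.2 x -
        if q = ((0, 0) : ℕ × ℕ) then treeWavelet f cells 0 0 x else 0)
        (f x - treeWavelet f cells 0 0 x) := (hsum x hx).sub hroot
    have hι : Function.Injective (fun q : ℕ × ℕ => ((q.1 + 1, q.2) : ℕ × ℕ)) := by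
      intro a b h
      simp only [Prod.ext_iff] at h ⊢
      exact ⟨by omega, h.2⟩
    have hvan : ∀ q ∉ Set.range (fun q : ℕ × ℕ => ((q.1 + 1, q.2) : ℕ × ℕ)),
        (treeWavelet f cells q.1 q.2 x -
          if q = ((0, 0) : ℕ × ℕ) then treeWavelet f cells 0 0 x else 0) = 0 := by
      intro q hq
      have hq1 : q.1 = 0 := by
        by_contra hne
        refine hq ⟨(q.1 - 1, q.2), ?_⟩
        have h1 : q.1 - 1 + 1 = q.1 := by omega
        simp only [Prod.ext_iff, h1]
      rcases q with ⟨l, j⟩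
      simp only at hq1
      subst hq1
      rcases eq_or_ne j 0 with rfl | hj
      · simp
      · have hzero : treeWavelet f cells 0 j x = 0 := by
          show (cells 0 j).indicator (fun _ => cellMean f (cells 0 j)) x = 0
          rw [h0 j hj]
          simp
        simp [hzero, Prod.ext_iff, hj]
    have h3 := (Function.Injective.hasSum_iff hι hvan).2 h2
    have h3' : HasSum (fun q : ℕ × ℕ => treeWavelet f cells (q.1 + 1) q.2 x)
        (f x - treeWavelet f cells 0 0 x) := by
      have hcomp : ((fun q : ℕ × ℕ => treeWavelet f cells q.1 q.2 x -
          if q = ((0, 0) : ℕ × ℕ) then treeWavelet f cells 0 0 x else 0) ∘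
            (fun q : ℕ × ℕ => ((q.1 + 1, q.2) : ℕ × ℕ)))
          = fun q : ℕ × ℕ => treeWavelet f cells (q.1 + 1) q.2 x := by
        funext q
        simp only [Function.comp_apply]
        rw [if_neg (by simp [Prod.ext_iff])]
        exact sub_zero _
      rwa [hcomp] at h3
    have h4 : HasSum (fun k : ℕ => ψ k x) (f x - treeWavelet f cells 0 0 x) := by
      have := (Equiv.hasSum_iff e).2 h3'
      simpa only [hψ, Function.comp_def] using this
    have h5 := h4.tendsto_sum_nat
    have hKtends : Filter.Tendsto (fun S : ℕ => M * 2 ^ S) Filter.atTop Filter.atTop := by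
      refine Filter.tendsto_atTop_mono (fun S => ?_) Filter.tendsto_id
      calc S ≤ 2 ^ S := (Nat.lt_two_pow_self (n := S)).le
      _ ≤ M * 2 ^ S := Nat.le_mul_of_pos_left _ hM0
    have h6 : Filter.Tendsto (fun S : ℕ => ∑ k ∈ Finset.range (M * 2 ^ S), ψ k x)
        Filter.atTop (nhds (f x - treeWavelet f cells 0 0 x)) := h5.comp hKtends
    have h7 : (fun S : ℕ => ∑ k ∈ Finset.Ico M (M * 2 ^ S), ψ k x)
        = fun S : ℕ => (∑ k ∈ Finset.range (M * 2 ^ S), ψ k x) -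
            ∑ k ∈ Finset.range M, ψ k x := by
      funext S
      exact Finset.sum_Ico_eq_sub _ (Nat.le_mul_of_pos_right M (by positivity))
    rw [h7, show f x - (treeWavelet f cells 0 0 x + ∑ k ∈ Finset.range M, ψ k x)
      = (f x - treeWavelet f cells 0 0 x) - ∑ k ∈ Finset.range M, ψ k x by abel]
    exact h6.sub tendsto_const_nhds
  -- Step E: Fatou
  have hfinal : eLpNorm
      (fun x => f x - (treeWavelet f cells 0 0 x + ∑ k ∈ Finset.range M, ψ k x)) P
      (volume.restrict (cells 0 0)) ≤ B * (1 - r2)⁻¹ := by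
    set G : (Fin n → ℝ) → EuclideanSpace ℝ (Fin d) :=
      fun x => f x - (treeWavelet f cells 0 0 x + ∑ k ∈ Finset.range M, ψ k x) with hG
    set FS : ℕ → (Fin n → ℝ) → EuclideanSpace ℝ (Fin d) :=
      fun S x => ∑ k ∈ Finset.Ico M (M * 2 ^ S), ψ k x with hFS
    have hFSm : ∀ S, StronglyMeasurable (FS S) := fun S =>
      Finset.stronglyMeasurable_fun_sum _ fun k _ => hψmeas k
    rw [eLpNorm_eq_lintegral_rpow_enorm_toReal hP0 hPt, hPr]
    have hkey : ∫⁻ x, (‖G x‖₊ : ℝ≥0∞) ^ p ∂(volume.restrict (cells 0 0))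
        ≤ (B * (1 - r2)⁻¹) ^ p := by
      have hptw : ∀ᵐ x ∂(volume.restrict (cells 0 0)),
          Filter.Tendsto (fun S => (‖FS S x‖₊ : ℝ≥0∞) ^ p) Filter.atTop
            (nhds ((‖G x‖₊ : ℝ≥0∞) ^ p)) := by
        filter_upwards [ae_restrict_mem (hmeas 0 0)] with x hx
        exact (ENNReal.continuous_rpow_const.tendsto _).comp
          ((ENNReal.continuous_coe.tendsto _).comp
            ((continuous_nnnorm.tendsto _).comp (htend x hx)))
      calc ∫⁻ x, (‖G x‖₊ : ℝ≥0∞) ^ p ∂(volume.restrict (cells 0 0))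
          = ∫⁻ x, Filter.liminf (fun S => (‖FS S x‖₊ : ℝ≥0∞) ^ p) Filter.atTop
            ∂(volume.restrict (cells 0 0)) :=
            lintegral_congr_ae (hptw.mono fun x h => h.liminf_eq.symm)
      _ ≤ Filter.liminf (fun S => ∫⁻ x, (‖FS S x‖₊ : ℝ≥0∞) ^ p
            ∂(volume.restrict (cells 0 0))) Filter.atTop :=
            lintegral_liminf_le fun S =>
              ((hFSm S).measurable.nnnorm.coe_nnreal_ennreal.pow_const p)
      _ ≤ (B * (1 - r2)⁻¹) ^ p := by
            have hb : ∀ S, ∫⁻ x, (‖FS S x‖₊ : ℝ≥0∞) ^ p ∂(volume.restrict (cells 0 0))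
                ≤ (B * (1 - r2)⁻¹) ^ p := by
              intro S
              have h1 := hpsum S
              have h2 : ∫⁻ x, (‖FS S x‖₊ : ℝ≥0∞) ^ p ∂(volume.restrict (cells 0 0))
                  = (eLpNorm (FS S) P (volume.restrict (cells 0 0))) ^ p := by
                rw [eLpNorm_eq_lintegral_rpow_enorm_toReal hP0 hPt, hPr, ← ENNReal.rpow_mul,
                  one_div, inv_mul_cancel₀ hp0.ne', ENNReal.rpow_one]
                rfl
              rw [h2]
              exact ENNReal.rpow_le_rpow h1 hp0.le
            calc Filter.liminf (fun S => ∫⁻ x, (‖FS S x‖₊ : ℝ≥0∞) ^ p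
                  ∂(volume.restrict (cells 0 0))) Filter.atTop
                ≤ Filter.liminf (fun _ : ℕ => (B * (1 - r2)⁻¹) ^ p) Filter.atTop :=
                  Filter.liminf_le_liminf (Filter.Eventually.of_forall hb)
            _ = (B * (1 - r2)⁻¹) ^ p := Filter.liminf_const _
    calc (∫⁻ x, (‖G x‖₊ : ℝ≥0∞) ^ p ∂(volume.restrict (cells 0 0))) ^ (1 / p)
        ≤ ((B * (1 - r2)⁻¹) ^ p) ^ (1 / p) := ENNReal.rpow_le_rpow hkey (by positivity)
    _ = B * (1 - r2)⁻¹ := by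
        rw [← ENNReal.rpow_mul, mul_one_div_cancel hp0.ne', ENNReal.rpow_one]
  -- Step F: identify the constant
  have hconst : B * (1 - r2)⁻¹ = ENNReal.ofReal (Cρ * C2 * (M : ℝ) ^ (-α)) * N ^ (1 / τ) := by
    have e1 : Kρ' = ENNReal.ofReal Cρ := by
      rw [hKρ', ENNReal.ofReal_rpow_of_pos hρ0, hCρ,
        ENNReal.ofReal_inv_of_pos (by linarith : (0:ℝ) < 1 - ρ ^ (1 / p))]
      congr 1
      rw [ENNReal.ofReal_sub _ hρpp.le, ENNReal.ofReal_one]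
    have e2 : (1 - r2)⁻¹ = ENNReal.ofReal C2 := by
      rw [hr2, show ((2:ℝ≥0∞)) = ENNReal.ofReal (2:ℝ) by rw [ENNReal.ofReal_ofNat],
        ENNReal.ofReal_rpow_of_pos two_pos, hC2,
        ENNReal.ofReal_inv_of_pos (by linarith : (0:ℝ) < 1 - (2:ℝ) ^ (-α))]
      congr 1
      rw [ENNReal.ofReal_sub _ h2αp.le, ENNReal.ofReal_one]
    have e3 : (M : ℝ≥0∞) ^ (-α) = ENNReal.ofReal ((M : ℝ) ^ (-α)) := by
      rw [show ((M : ℕ) : ℝ≥0∞) = ENNReal.ofReal ((M : ℕ) : ℝ) from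
        (ENNReal.ofReal_natCast M).symm]
      exact ENNReal.ofReal_rpow_of_pos (by exact_mod_cast hM0)
    rw [hB, e1, e2, e3, ENNReal.ofReal_mul (by positivity), ENNReal.ofReal_mul hCρpos.le]
    ring
  rw [hconst] at hfinal
  simpa only [hψ] using hfinal
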